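/- For every monomial P of even degree and every multi-index k̄, the number τ^{k̄}(P) defined by the Schwinger-Dyson recursion τ^{k̄}(X_i P) = Σ_{p̄ ≤ k̄} Π_j binom(k_j,p_j) Σ_{P = P₁X_iP₂} τ^{p̄}(P₁)τ^{k̄−p̄}(P₂) + Σ_j k_j τ^{k̄−1_j}(𝒟_i(q_j + q_j^*)P), τ^{k̄}(1) = 1_{k̄=0}, is a nonnegative integer. -/

import Mathlib

open Finset

/-- The positions at which the letter `i` occurs in the word `P`,
corresponding to the decompositions `P = P₁ X_i P₂`. -/
def occurrences {m : ℕ} (i : Fin m) (P : List (Fin m)) : Finset (Fin P.length) :=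
  Finset.univ.filter (fun k => P.get k = i)

/-- The multi-index with a single `1` in position `j`. -/
def unitIdx {n : ℕ} (j : Fin n) : Fin n → ℕ := fun j' => if j' = j then 1 else 0

/-- Cyclic-derivative term: for `q = q₁ X_i q₂` (occurrence at position `k`),
the word `q₂ q₁ P`. -/
def cycTerm {m : ℕ} (q : List (Fin m)) (k : ℕ) (P : List (Fin m)) : List (Fin m) :=
  q.drop (k + 1) ++ q.take k ++ P

/-- The numbers `τ^{k̄}(P)` defined by the Schwinger-Dyson recursion
(`τ^{k̄}(1) = 1_{k̄=0}`, and the recursion on `τ^{k̄}(X_i P)` involving binomial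
coefficients, decompositions of `P`, and the cyclic derivatives `𝒟_i(q_j + q_j^*)`)
are nonnegative integers for every monomial `P` of even degree. -/
theorem schwinger_dyson_recursion_nat_valued
    (m n : ℕ) (q : Fin n → List (Fin m))
    (τ : (Fin n → ℕ) → List (Fin m) → ℝ)
    (hbase : ∀ kk : Fin n → ℕ, τ kk [] = if kk = 0 then 1 else 0)
    (hrec : ∀ (kk : Fin n → ℕ) (i : Fin m) (P : List (Fin m)),
      τ kk (i :: P) =
        (∑ pp ∈ Finset.Iic kk,
          (∏ j, ((kk j).choose (pp j) : ℝ)) *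
            ∑ k ∈ occurrences i P,
              τ pp (P.take (k : ℕ)) * τ (kk - pp) (P.drop ((k : ℕ) + 1)))
        + ∑ j : Fin n,
            (kk j : ℝ) *
              ((∑ k ∈ occurrences i (q j), τ (kk - unitIdx j) (cycTerm (q j) (k : ℕ) P))
               + ∑ k ∈ occurrences i (q j).reverse,
                   τ (kk - unitIdx j) (cycTerm (q j).reverse (k : ℕ) P))) :
    ∀ (kk : Fin n → ℕ) (P : List (Fin m)), Even P.length →
      ∃ N : ℕ, τ kk P = (N : ℝ) := by
  set S : Subsemiring ℝ := (Nat.castRingHom ℝ).rangeS with hS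
  have hmem : ∀ x : ℝ, x ∈ S → ∃ N : ℕ, x = (N : ℝ) := by
    rintro x ⟨N, rfl⟩; exact ⟨N, rfl⟩
  suffices h : ∀ (s : ℕ) (kk : Fin n → ℕ) (P : List (Fin m)), (∑ j, kk j) ≤ s → τ kk P ∈ S by
    intro kk P _
    exact hmem _ (h (∑ j, kk j) kk P le_rfl)
  intro s
  induction s using Nat.strong_induction_on with
  | _ s ihs =>
    suffices h : ∀ (l : ℕ) (P : List (Fin m)), P.length ≤ l →
        ∀ kk : Fin n → ℕ, (∑ j, kk j) ≤ s → τ kk P ∈ S by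
      intro kk P hkk; exact h P.length P le_rfl kk hkk
    intro l
    induction l with
    | zero =>
      intro P hP kk _
      rw [List.length_eq_zero_iff.mp (Nat.le_zero.mp hP), hbase]
      split
      · exact Subsemiring.one_mem S
      · exact Subsemiring.zero_mem S
    | succ l ihl =>
      intro P hP kk hkk
      match P with
      | [] =>
        rw [hbase]
        split
        · exact Subsemiring.one_mem S
        · exact Subsemiring.zero_mem S
      | i :: P' =>
        have hP' : P'.length ≤ l := Nat.le_of_succ_le_succ hP
        rw [hrec]
        apply Subsemiring.add_mem
        · apply Subsemiring.sum_mem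
          intro pp hpp
          have hpple : pp ≤ kk := Finset.mem_Iic.mp hpp
          apply Subsemiring.mul_mem
          · apply Subsemiring.prod_mem
            intro j _
            exact ⟨(kk j).choose (pp j), rfl⟩
          · apply Subsemiring.sum_mem
            intro k _
            apply Subsemiring.mul_mem
            · refine ihl _ ?_ pp ?_
              · rw [List.length_take]; exact le_trans (min_le_right _ _) hP'
              · exact le_trans (Finset.sum_le_sum fun j _ => hpple j) hkk
            · refine ihl _ ?_ (kk - pp) ?_
              · rw [List.length_drop]; exact le_trans (Nat.sub_le _ _) hP'
              · refine le_trans (Finset.sum_le_sum fun j _ => ?_) hkk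
                exact Nat.sub_le _ _
        · apply Subsemiring.sum_mem
          intro j _
          by_cases h0 : kk j = 0
          · simp only [h0, Nat.cast_zero, zero_mul]
            exact Subsemiring.zero_mem S
          · apply Subsemiring.mul_mem S (RingHom.mem_rangeS.mpr ⟨kk j, rfl⟩)
            have hlt : (∑ j', (kk - unitIdx j) j') < s := by
              refine lt_of_lt_of_le ?_ hkk
              apply Finset.sum_lt_sum
              · intro j' _
                exact Nat.sub_le _ _
              · refine ⟨j, Finset.mem_univ j, ?_⟩
                have : (kk - unitIdx j) j = kk j - 1 := by
                  simp [unitIdx]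
                rw [this]
                exact Nat.sub_lt (Nat.pos_of_ne_zero h0) one_pos
            have IH := ihs _ hlt (kk - unitIdx j)
            apply Subsemiring.add_mem
            · exact Subsemiring.sum_mem S fun k _ => IH _ le_rfl
            · exact Subsemiring.sum_mem S fun k _ => IH _ le_rfl
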